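/- For every decision tree T, OPT_T ≤ sqrt(2 · DTSize(T)), where DTSize(T) is the number of nodes of T. -/
import Mathlib


/-- A deterministic decision tree over `{0,1}^n`: every internal node is labeled
by a query index `i ∈ Fin n` and has exactly two children (a 0-child and a
1-child); every leaf is labeled by an output value. -/
inductive DTree (n : ℕ) : Type where
  | leaf (b : Bool) : DTree n
  | node (i : Fin n) (t0 t1 : DTree n) : DTree n

namespace DTree

/-- On input `x`, from each internal node labeled `i` follow the edge to the
`x i`-child; output the label of the leaf reached. -/
def eval {n : ℕ} : DTree n → (Fin n → Bool) → Bool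
  | leaf b, _ => b
  | node i t0 t1, x => if x i then t1.eval x else t0.eval x

/-- `DTSize`: the total number of nodes of the tree. -/
def size {n : ℕ} : DTree n → ℕ
  | leaf _ => 1
  | node _ t0 t1 => 1 + t0.size + t1.size

/-- The depth: the maximum number of edges on a root-to-leaf path. -/
def depth {n : ℕ} : DTree n → ℕ
  | leaf _ => 0
  | node _ t0 t1 => 1 + max t0.depth t1.depth

/-- The rank of a binary tree: a leaf has rank 0; an internal node whose two
children have ranks `r₁, r₂` has rank `max r₁ r₂` if `r₁ ≠ r₂`, and `r₁ + 1`
if `r₁ = r₂`. -/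
def rank {n : ℕ} : DTree n → ℕ
  | leaf _ => 0
  | node _ t0 t1 => if t0.rank = t1.rank then t0.rank + 1 else max t0.rank t1.rank

end DTree

/-- The decision tree `t` computes the total Boolean function `f`. -/
def ComputesFn {n : ℕ} (t : DTree n) (f : (Fin n → Bool) → Bool) : Prop :=
  ∀ x, t.eval x = f x

/-- An assignment of one real weight to each edge of a binary tree, recorded as a
tree of the same shape: at every internal node, `w0` is the weight of the edge to
the 0-child and `w1` the weight of the edge to the 1-child. -/
inductive WTree : Type where
  | leaf : WTree
  | node (w0 w1 : ℝ) (c0 c1 : WTree) : WTree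

namespace WTree

/-- All weights are strictly positive. -/
def Pos : WTree → Prop
  | leaf => True
  | node w0 w1 c0 c1 => 0 < w0 ∧ 0 < w1 ∧ c0.Pos ∧ c1.Pos

/-- `max_{P ∈ P(T)} Σ_{e ∈ P} 1 / W_e`: the maximum over root-to-leaf paths `P`
of the sum of the inverse weights of the edges along `P`. -/
noncomputable def pathCost : WTree → ℝ
  | leaf => 0
  | node w0 w1 c0 c1 => max (1 / w0 + c0.pathCost) (1 / w1 + c1.pathCost)

/-- `max_{P ∈ P(T)} Σ_{e ∈ P̄} W_e`: the maximum over root-to-leaf paths `P` of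
the sum of the weights of the edges having exactly one endpoint on `P`
(i.e. at each internal node of `P`, the edge to the child off the path). -/
noncomputable def devCost : WTree → ℝ
  | leaf => 0
  | node w0 w1 c0 c1 => max (w1 + c0.devCost) (w0 + c1.devCost)

end WTree

/-- The weight assignment `w` has the same shape as the decision tree `t`
(i.e. it assigns a weight to each edge of `t`). -/
def MatchesW {n : ℕ} : DTree n → WTree → Prop
  | DTree.leaf _, WTree.leaf => True
  | DTree.node _ t0 t1, WTree.node _ _ c0 c1 => MatchesW t0 c0 ∧ MatchesW t1 c1
  | _, _ => False

/-- `OPT_T`: the infimum, over all positive weight assignments `W` to the edges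
of `T`, of `sqrt((max_{P} Σ_{e∈P̄} W_e) · (max_{P} Σ_{e∈P} 1/W_e))`.
For a single leaf this is `0`. -/
noncomputable def OPT {n : ℕ} (t : DTree n) : ℝ :=
  sInf {v : ℝ | ∃ w : WTree, MatchesW t w ∧ w.Pos ∧
    v = Real.sqrt (w.devCost * w.pathCost)}

-- auxiliary lemmas

lemma key_ineq (x y z : ℝ) (hx : 2 ≤ x^2) (hy : 2 ≤ y^2) (hx0 : 0 ≤ x) (hy0 : 0 ≤ y)
    (hz0 : 0 ≤ z) (hz : z^2 = 2 + x^2 + y^2) : 1 ≤ (z - x) * (z - y) := by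
  have key : z * (x + y) ≤ 1 + x^2 + y^2 + x*y := by
    nlinarith [sq_nonneg (z*(x+y) - (1 + x^2 + y^2 + x*y)), sq_nonneg (x - y),
      sq_nonneg (x*y - 2), mul_nonneg hx0 hy0, sq_nonneg (x*y - 1)]
  nlinarith [key]

lemma size_pos {n : ℕ} (t : DTree n) : 1 ≤ t.size := by
  cases t <;> simp [DTree.size] <;> omega

lemma exists_good_weights {n : ℕ} (t : DTree n) :
    ∃ w : WTree, MatchesW t w ∧ w.Pos ∧
      w.devCost ≤ Real.sqrt (2 * t.size) ∧ w.pathCost ≤ Real.sqrt (2 * t.size) := by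
  induction t with
  | leaf b =>
      exact ⟨WTree.leaf, trivial, trivial, by simp [WTree.devCost, Real.sqrt_nonneg],
        by simp [WTree.pathCost, Real.sqrt_nonneg]⟩
  | node i t0 t1 ih0 ih1 =>
      obtain ⟨w0, hm0, hp0, hd0, hc0⟩ := ih0
      obtain ⟨w1, hm1, hp1, hd1, hc1⟩ := ih1
      set s0 : ℝ := (t0.size : ℝ) with hs0
      set s1 : ℝ := (t1.size : ℝ) with hs1
      have hs0one : (1:ℝ) ≤ s0 := by rw [hs0]; exact_mod_cast size_pos t0
      have hs1one : (1:ℝ) ≤ s1 := by rw [hs1]; exact_mod_cast size_pos t1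
      have hsize : ((DTree.node i t0 t1).size : ℝ) = 1 + s0 + s1 := by
        rw [hs0, hs1]; simp only [DTree.size]; push_cast; ring
      set x : ℝ := Real.sqrt (2 * s0) with hxd
      set y : ℝ := Real.sqrt (2 * s1) with hyd
      set z : ℝ := Real.sqrt (2 * (1 + s0 + s1)) with hzd
      have hx0 : 0 ≤ x := Real.sqrt_nonneg _
      have hy0 : 0 ≤ y := Real.sqrt_nonneg _
      have hz0 : 0 ≤ z := Real.sqrt_nonneg _
      have hx2 : x^2 = 2 * s0 := Real.sq_sqrt (by linarith)
      have hy2 : y^2 = 2 * s1 := Real.sq_sqrt (by linarith)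
      have hz2 : z^2 = 2 * (1 + s0 + s1) := Real.sq_sqrt (by linarith)
      have hkey : 1 ≤ (z - x) * (z - y) :=
        key_ineq x y z (by nlinarith) (by nlinarith) hx0 hy0 hz0 (by linarith)
      have hxz : x < z := by
        nlinarith [sq_nonneg (z - x), sq_nonneg (z + x)]
      have hyz : y < z := by
        nlinarith [sq_nonneg (z - y), sq_nonneg (z + y)]
      refine ⟨WTree.node (1/(z - x)) (1/(z - y)) w0 w1, ⟨hm0, hm1⟩,
        ⟨one_div_pos.mpr (by linarith), one_div_pos.mpr (by linarith), hp0, hp1⟩, ?_, ?_⟩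
      · rw [hsize]
        have h1 : 1/(z - y) + w0.devCost ≤ z := by
          have : 1/(z - y) ≤ z - x := by
            rw [div_le_iff₀ (by linarith)]
            exact hkey
          have hd0' : w0.devCost ≤ x := hd0
          linarith
        have h2 : 1/(z - x) + w1.devCost ≤ z := by
          have : 1/(z - x) ≤ z - y := by
            rw [div_le_iff₀ (by linarith)]
            rw [mul_comm]; exact hkey
          have hd1' : w1.devCost ≤ y := hd1
          linarith
        exact max_le h1 h2
      · rw [hsize]
        have h1 : 1/(1/(z - x)) + w0.pathCost ≤ z := by
          rw [one_div_one_div]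
          have : w0.pathCost ≤ x := hc0
          linarith
        have h2 : 1/(1/(z - y)) + w1.pathCost ≤ z := by
          rw [one_div_one_div]
          have : w1.pathCost ≤ y := hc1
          linarith
        exact max_le h1 h2

lemma costs_nonneg (w : WTree) (h : w.Pos) : 0 ≤ w.devCost ∧ 0 ≤ w.pathCost := by
  induction w with
  | leaf => simp [WTree.devCost, WTree.pathCost]
  | node w0 w1 c0 c1 ih0 ih1 =>
      obtain ⟨h0, h1, hp0, hp1⟩ := h
      obtain ⟨hd0, hc0⟩ := ih0 hp0
      obtain ⟨hd1, hc1⟩ := ih1 hp1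
      constructor
      · exact le_trans (by linarith) (le_max_left (w1 + c0.devCost) _)
      · refine le_trans ?_ (le_max_left (1/w0 + c0.pathCost) _)
        have : 0 < 1/w0 := one_div_pos.mpr h0
        linarith


/-- For every decision tree `T`,
`OPT_T ≤ sqrt(2 · DTSize(T))`, where `DTSize(T)` is the number of nodes of `T`. -/
theorem OPT_le_sqrt_two_size {n : ℕ} (t : DTree n) :
    OPT t ≤ Real.sqrt (2 * (t.size : ℝ)) := by
  obtain ⟨w, hm, hp, hd, hc⟩ := exists_good_weights t
  have hmem : Real.sqrt (w.devCost * w.pathCost) ∈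
      {v : ℝ | ∃ w' : WTree, MatchesW t w' ∧ w'.Pos ∧
        v = Real.sqrt (w'.devCost * w'.pathCost)} := ⟨w, hm, hp, rfl⟩
  have hbdd : BddBelow {v : ℝ | ∃ w' : WTree, MatchesW t w' ∧ w'.Pos ∧
      v = Real.sqrt (w'.devCost * w'.pathCost)} := by
    refine ⟨0, fun v hv => ?_⟩
    obtain ⟨w', _, _, rfl⟩ := hv
    exact Real.sqrt_nonneg _
  refine le_trans (csInf_le hbdd hmem) ?_
  obtain ⟨hdn, hcn⟩ := costs_nonneg w hp
  calc Real.sqrt (w.devCost * w.pathCost)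
      ≤ Real.sqrt (Real.sqrt (2*t.size) * Real.sqrt (2*t.size)) :=
        Real.sqrt_le_sqrt (mul_le_mul hd hc hcn (Real.sqrt_nonneg _))
    _ = Real.sqrt (2 * t.size) := Real.sqrt_mul_self (Real.sqrt_nonneg _)
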